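/- Let p be a prime. For non-zero points u, v, w ∈ ℚₚ³, define the projective distance dist(u,w) = ‖u ∧ w‖ₚ / (‖u‖ₚ · ‖w‖ₚ). Then dist satisfies the ultrametric inequality: dist(u,w) ≤ max(dist(u,v), dist(v,w)). -/

import Mathlib

/-- The p-adic sup norm of a vector in `ℚₚ³`. -/
noncomputable def pSup {p : ℕ} [Fact p.Prime] (v : Fin 3 → ℚ_[p]) : ℝ := max (max ‖v 0‖ ‖v 1‖) ‖v 2‖

/-- The cross product on `ℚₚ³`. -/
noncomputable def pCross {p : ℕ} [Fact p.Prime] (v w : Fin 3 → ℚ_[p]) : Fin 3 → ℚ_[p] :=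
  ![v 1 * w 2 - v 2 * w 1, v 2 * w 0 - v 0 * w 2, v 0 * w 1 - v 1 * w 0]

/-- The projective distance on non-zero points of `ℚₚ³`. -/
noncomputable def pDist {p : ℕ} [Fact p.Prime] (u w : Fin 3 → ℚ_[p]) : ℝ :=
  pSup (pCross u w) / (pSup u * pSup w)

section aux
variable {p : ℕ} [Fact p.Prime]

lemma norm_le_pSup (v : Fin 3 → ℚ_[p]) (k : Fin 3) : ‖v k‖ ≤ pSup v := by
  fin_cases k <;> simp [pSup, le_max_iff, le_refl]

lemma pSup_nonneg (v : Fin 3 → ℚ_[p]) : 0 ≤ pSup v :=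
  le_trans (norm_nonneg _) (norm_le_pSup v 0)

lemma pSup_pos {v : Fin 3 → ℚ_[p]} (hv : v ≠ 0) : 0 < pSup v := by
  obtain ⟨k, hk⟩ := Function.ne_iff.mp hv
  have hk' : v k ≠ 0 := by simpa using hk
  exact lt_of_lt_of_le (norm_pos_iff.mpr hk') (norm_le_pSup v k)

lemma term_bound (X Y : Fin 3 → ℚ_[p]) (c k : Fin 3) :
    ‖X c * Y k‖ ≤ pSup X * pSup Y := by
  rw [norm_mul]
  exact mul_le_mul (norm_le_pSup X c) (norm_le_pSup Y k) (norm_nonneg _) (pSup_nonneg X)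

lemma pSup_exists (v : Fin 3 → ℚ_[p]) : ∃ k : Fin 3, pSup v = ‖v k‖ := by
  unfold pSup
  rcases max_choice (max ‖v 0‖ ‖v 1‖) ‖v 2‖ with h | h
  · rw [h]
    rcases max_choice ‖v 0‖ ‖v 1‖ with h' | h'
    · exact ⟨0, h'⟩
    · exact ⟨1, h'⟩
  · exact ⟨2, h⟩

lemma chain3 {a b c d : ℚ_[p]} {M : ℝ} (h : a = b + (c + d))
    (hb : ‖b‖ ≤ M) (hc : ‖c‖ ≤ M) (hd : ‖d‖ ≤ M) : ‖a‖ ≤ M := by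
  rw [h]
  refine le_trans (Padic.nonarchimedean _ _) (max_le hb ?_)
  exact le_trans (Padic.nonarchimedean _ _) (max_le hc hd)

lemma det_bound (u v w : Fin 3 → ℚ_[p]) :
    ‖u 0 * pCross v w 0 + (u 1 * pCross v w 1 + u 2 * pCross v w 2)‖
      ≤ pSup (pCross v w) * pSup u := by
  refine chain3 rfl ?_ ?_ ?_ <;>
    · rw [mul_comm]
      exact term_bound _ _ _ _

lemma comp_bound (u v w : Fin 3 → ℚ_[p]) (c k : Fin 3) :
    ‖pCross u w c * v k‖
      ≤ max (pSup (pCross u v) * pSup w) (pSup (pCross v w) * pSup u) := by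
  set D : ℚ_[p] := u 0 * pCross v w 0 + (u 1 * pCross v w 1 + u 2 * pCross v w 2) with hD
  have hDb : ‖D‖ ≤ pSup (pCross v w) * pSup u := det_bound u v w
  have hb : ∀ c k : Fin 3, ‖pCross u v c * w k‖
      ≤ max (pSup (pCross u v) * pSup w) (pSup (pCross v w) * pSup u) :=
    fun c k => le_max_of_le_left (term_bound _ _ _ _)
  have hc : ∀ c k : Fin 3, ‖pCross v w c * u k‖
      ≤ max (pSup (pCross u v) * pSup w) (pSup (pCross v w) * pSup u) :=
    fun c k => le_max_of_le_right (term_bound _ _ _ _)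
  have hd0 : ‖(0 : ℚ_[p])‖
      ≤ max (pSup (pCross u v) * pSup w) (pSup (pCross v w) * pSup u) := by
    rw [norm_zero]
    exact le_max_of_le_left (mul_nonneg (pSup_nonneg _) (pSup_nonneg _))
  have hdD : ‖-D‖
      ≤ max (pSup (pCross u v) * pSup w) (pSup (pCross v w) * pSup u) := by
    rw [norm_neg]; exact le_max_of_le_right hDb
  fin_cases c <;> fin_cases k
  · exact chain3 (by simp [pCross, hD]; ring) (hb 0 0) (hc 0 0) hdD
  · exact chain3 (by simp [pCross]; ring) (hb 0 1) (hc 0 1) hd0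
  · exact chain3 (by simp [pCross]; ring) (hb 0 2) (hc 0 2) hd0
  · exact chain3 (by simp [pCross]; ring) (hb 1 0) (hc 1 0) hd0
  · exact chain3 (by simp [pCross, hD]; ring) (hb 1 1) (hc 1 1) hdD
  · exact chain3 (by simp [pCross]; ring) (hb 1 2) (hc 1 2) hd0
  · exact chain3 (by simp [pCross]; ring) (hb 2 0) (hc 2 0) hd0
  · exact chain3 (by simp [pCross]; ring) (hb 2 1) (hc 2 1) hd0
  · exact chain3 (by simp [pCross, hD]; ring) (hb 2 2) (hc 2 2) hdD

lemma key (u v w : Fin 3 → ℚ_[p]) :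
    pSup (pCross u w) * pSup v
      ≤ max (pSup (pCross u v) * pSup w) (pSup (pCross v w) * pSup u) := by
  obtain ⟨c, hc⟩ := pSup_exists (pCross u w)
  obtain ⟨k, hk⟩ := pSup_exists v
  rw [hc, hk, ← norm_mul]
  exact comp_bound u v w c k

end aux

theorem stmt_5 (p : ℕ) [Fact p.Prime] (u v w : Fin 3 → ℚ_[p])
    (hu : u ≠ 0) (hv : v ≠ 0) (hw : w ≠ 0) :
    pDist u w ≤ max (pDist u v) (pDist v w) := by
  have hSu := pSup_pos hu
  have hSv := pSup_pos hv
  have hSw := pSup_pos hw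
  have hkey := key u v w
  rcases le_max_iff.mp hkey with h | h
  · refine le_max_of_le_left ?_
    unfold pDist
    rw [div_le_div_iff₀ (by positivity) (by positivity)]
    nlinarith [pSup_nonneg (pCross u w), pSup_nonneg (pCross u v)]
  · refine le_max_of_le_right ?_
    unfold pDist
    rw [div_le_div_iff₀ (by positivity) (by positivity)]
    nlinarith [pSup_nonneg (pCross u w), pSup_nonneg (pCross v w)]
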